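/- Let G(z) = 1/( z(z+1)[(z+1)·Log(1 + 1/z) − 1] ), where Log is the principal branch of the complex logarithm, a holomorphic function on ℂ ∖ [−1, 0]. Then lim_{y→0⁺} iy·G(iy) = 0 and lim_{y→0⁺} iy·G(−1 + iy) = 1. -/

import Mathlib

open Filter Complex Topology Bornology


/-- `G(z) = 1/( z(z+1)[(z+1)·Log(1 + 1/z) − 1] )` with the principal logarithm. -/
noncomputable def Gc (z : ℂ) : ℂ :=
  (z * (z + 1) * ((z + 1) * Complex.log (1 + 1 / z) - 1))⁻¹

/-- `iy·G(iy) → 0` and `iy·G(−1 + iy) → 1` as `y → 0⁺`. -/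
theorem Gc_no_mass_at_zero_mass_one_at_minus_one :
    Filter.Tendsto (fun y : ℝ => ((y : ℂ) * Complex.I) * Gc ((y : ℂ) * Complex.I))
      (nhdsWithin 0 (Set.Ioi 0)) (nhds 0) ∧
    Filter.Tendsto (fun y : ℝ => ((y : ℂ) * Complex.I) * Gc (-1 + (y : ℂ) * Complex.I))
      (nhdsWithin 0 (Set.Ioi 0)) (nhds 1) := by
  constructor
  · -- part 1
    set D : ℝ → ℂ := fun y => ((y:ℂ)*Complex.I + 1) *
        (((y:ℂ)*Complex.I + 1) * Complex.log (1 + 1/((y:ℂ)*Complex.I)) - 1) with hD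
    have hnorm : Tendsto (fun y => ‖D y‖) (𝓝[>] (0:ℝ)) atTop := by
      apply tendsto_atTop_mono' _ (_ : ∀ᶠ y in 𝓝[>] (0:ℝ), -Real.log y - 1 ≤ ‖D y‖)
      · exact tendsto_atTop_add_const_right _ (-1)
          (tendsto_neg_atBot_atTop.comp Real.tendsto_log_nhdsGT_zero)
      · filter_upwards [self_mem_nhdsWithin] with y (hy : 0 < y)
        set a : ℂ := (y:ℂ)*Complex.I + 1 with ha
        set L : ℂ := Complex.log (1 + 1/((y:ℂ)*Complex.I)) with hL
        have hare : a.re = 1 := by simp [ha]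
        have habs : (1:ℝ) ≤ ‖a‖ := by
          simpa [hare] using Complex.abs_re_le_norm a
        have hLge : -Real.log y ≤ ‖L‖ := by
          have him : (1 + 1/((y:ℂ)*Complex.I)).im = -(1/y) := by
            rw [one_div]
            simp [Complex.inv_im, Complex.normSq_apply]
          have habsw : 1/y ≤ ‖(1 + 1/((y:ℂ)*Complex.I))‖ := by
            have h := Complex.abs_im_le_norm (1 + 1/((y:ℂ)*Complex.I))
            rw [him, abs_neg, abs_of_pos (by positivity : (0:ℝ) < 1/y)] at h
            exact h
          have hre : L.re = Real.log (‖(1 + 1/((y:ℂ)*Complex.I))‖) :=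
            Complex.log_re _
          calc -Real.log y = Real.log (1/y) := by
                rw [Real.log_div one_ne_zero (ne_of_gt hy), Real.log_one]; ring
            _ ≤ Real.log (‖(1 + 1/((y:ℂ)*Complex.I))‖) :=
                Real.log_le_log (by positivity) habsw
            _ = L.re := hre.symm
            _ ≤ |L.re| := le_abs_self _
            _ ≤ ‖L‖ := by simpa using Complex.abs_re_le_norm L
        calc -Real.log y - 1 ≤ ‖L‖ - 1 := by linarith
          _ ≤ ‖a‖ * ‖L‖ - 1 := by nlinarith [norm_nonneg L]
          _ = ‖a * L‖ - ‖(1:ℂ)‖ := by rw [norm_mul]; simp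
          _ ≤ ‖a * L - 1‖ := norm_sub_norm_le _ _
          _ ≤ ‖a‖ * ‖a * L - 1‖ := by nlinarith [norm_nonneg (a*L-1)]
          _ = ‖D y‖ := by rw [hD, norm_mul]
    have hcob : Tendsto D (𝓝[>] (0:ℝ)) (Bornology.cobounded ℂ) :=
      tendsto_norm_atTop_iff_cobounded.mp hnorm
    have hinv : Tendsto (fun y => (D y)⁻¹) (𝓝[>] (0:ℝ)) (𝓝 0) :=
      tendsto_inv₀_cobounded.comp hcob
    refine hinv.congr' ?_
    filter_upwards [self_mem_nhdsWithin] with y (hy : 0 < y)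
    have hiy : (y:ℂ)*Complex.I ≠ 0 := by
      simp [Complex.ext_iff, ne_of_gt hy]
    have hprod : (y:ℂ)*Complex.I * ((y:ℂ)*Complex.I + 1) *
        (((y:ℂ)*Complex.I + 1) * Complex.log (1 + 1/((y:ℂ)*Complex.I)) - 1)
        = (y:ℂ)*Complex.I * D y := by rw [hD]; ring
    rw [Gc, hprod, mul_inv ((y:ℂ)*Complex.I) (D y), ← mul_assoc,
      mul_inv_cancel₀ hiy, one_mul]
  · -- part 2
    set w : ℝ → ℂ := fun y => 1 + 1/(-1 + (y:ℂ)*Complex.I) with hw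
    have hne : ∀ y : ℝ, (-1 + (y:ℂ)*Complex.I) ≠ 0 := by
      intro y h
      have := congrArg Complex.re h
      simp at this
    have hkey : Tendsto (fun y : ℝ => (y:ℂ)*Complex.I * Complex.log (w y))
        (𝓝[>] (0:ℝ)) (𝓝 0) := by
      apply squeeze_zero_norm'
          (a := fun y => y * |Real.log y| + y * (Real.log (Real.sqrt (1+y^2)) + Real.pi))
      · filter_upwards [self_mem_nhdsWithin, Ioo_mem_nhdsGT_of_mem
          (Set.mem_Ico.mpr ⟨le_refl 0, one_pos⟩)] with y (hy : 0 < y) hy1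
        have hy1 : y < 1 := hy1.2
        have hwy : w y = ((y:ℂ)*Complex.I)/(-1 + (y:ℂ)*Complex.I) := by
          rw [hw]
          field_simp [hne y]
          ring
        have habsw : ‖w y‖ = y / Real.sqrt (1+y^2) := by
          rw [hwy, norm_div]
          congr 1
          · simp [Complex.norm_def, Complex.normSq_apply, Real.sqrt_mul_self hy.le, hy.le]
          · rw [Complex.norm_def]
            congr 1
            simp [Complex.normSq_apply]
            ring
        have hs1 : (1:ℝ) ≤ Real.sqrt (1+y^2) := by
          have := Real.sqrt_le_sqrt (show (1:ℝ) ≤ 1+y^2 by nlinarith)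
          simpa using this
        have hlogw : Real.log (‖w y‖) = Real.log y - Real.log (Real.sqrt (1+y^2)) := by
          rw [habsw, Real.log_div (ne_of_gt hy) (by positivity)]
        have hlogbound : |Real.log (‖w y‖)| ≤
            |Real.log y| + Real.log (Real.sqrt (1+y^2)) := by
          rw [hlogw]
          have h2 : (0:ℝ) ≤ Real.log (Real.sqrt (1+y^2)) := Real.log_nonneg hs1
          calc |Real.log y - Real.log (Real.sqrt (1+y^2))|
              ≤ |Real.log y| + |Real.log (Real.sqrt (1+y^2))| := abs_sub _ _
            _ = |Real.log y| + Real.log (Real.sqrt (1+y^2)) := by rw [_root_.abs_of_nonneg h2]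
        have hLbound : ‖Complex.log (w y)‖ ≤
            |Real.log y| + Real.log (Real.sqrt (1+y^2)) + Real.pi := by
          calc ‖Complex.log (w y)‖
              ≤ |(Complex.log (w y)).re| + |(Complex.log (w y)).im| := by
                simpa using Complex.norm_le_abs_re_add_abs_im (Complex.log (w y))
            _ ≤ |Real.log y| + Real.log (Real.sqrt (1+y^2)) + Real.pi := by
                rw [Complex.log_re, Complex.log_im]
                have := Complex.abs_arg_le_pi (w y)
                linarith [hlogbound]
        calc ‖(y:ℂ)*Complex.I * Complex.log (w y)‖
            = y * ‖Complex.log (w y)‖ := by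
              rw [norm_mul, norm_mul, Complex.norm_I, Complex.norm_real,
                Real.norm_of_nonneg hy.le, mul_one]
          _ ≤ y * (|Real.log y| + Real.log (Real.sqrt (1+y^2)) + Real.pi) := by
              apply mul_le_mul_of_nonneg_left hLbound hy.le
          _ = y * |Real.log y| + y * (Real.log (Real.sqrt (1+y^2)) + Real.pi) := by ring
      · have h1 : Tendsto (fun y : ℝ => y * |Real.log y|) (𝓝[>] (0:ℝ)) (𝓝 0) := by
          have := (tendsto_log_mul_rpow_nhdsGT_zero one_pos).abs
          simp only [abs_zero] at this
          refine this.congr' ?_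
          filter_upwards [self_mem_nhdsWithin] with y (hy : 0 < y)
          rw [abs_mul, Real.rpow_one, abs_of_pos hy]
          ring
        have h2 : Tendsto (fun y : ℝ => y * (Real.log (Real.sqrt (1+y^2)) + Real.pi))
            (𝓝[>] (0:ℝ)) (𝓝 0) := by
          have : ContinuousAt (fun y : ℝ => y * (Real.log (Real.sqrt (1+y^2)) + Real.pi)) 0 := by
            apply ContinuousAt.mul continuousAt_id
            apply ContinuousAt.add _ continuousAt_const
            apply Real.continuousAt_log (by positivity) |>.comp
            exact (Real.continuous_sqrt.comp (by continuity)).continuousAt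
          have h0 := this.continuousWithinAt (s := Set.Ioi 0)
          simpa using h0.tendsto
        simpa using h1.add h2
    have hD2 : Tendsto (fun y : ℝ => (-1 + (y:ℂ)*Complex.I) *
        ((y:ℂ)*Complex.I * Complex.log (w y) - 1)) (𝓝[>] (0:ℝ)) (𝓝 1) := by
      have hfirst : Tendsto (fun y : ℝ => -1 + (y:ℂ)*Complex.I) (𝓝[>] (0:ℝ)) (𝓝 (-1)) := by
        have : ContinuousAt (fun y : ℝ => -1 + (y:ℂ)*Complex.I) 0 := by fun_prop
        simpa using (this.continuousWithinAt (s := Set.Ioi 0)).tendsto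
      have := hfirst.mul (hkey.sub (tendsto_const_nhds (x := (1:ℂ))))
      simpa using this
    have hinv : Tendsto (fun y : ℝ => ((-1 + (y:ℂ)*Complex.I) *
        ((y:ℂ)*Complex.I * Complex.log (w y) - 1))⁻¹) (𝓝[>] (0:ℝ)) (𝓝 1) := by
      simpa using hD2.inv₀ one_ne_zero
    refine hinv.congr' ?_
    filter_upwards [self_mem_nhdsWithin] with y (hy : 0 < y)
    have hiy : (y:ℂ)*Complex.I ≠ 0 := by
      simp [Complex.ext_iff, ne_of_gt hy]
    set E : ℂ := (-1 + (y:ℂ)*Complex.I) * ((y:ℂ)*Complex.I * Complex.log (w y) - 1) with hE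
    have hprod : (-1 + (y:ℂ)*Complex.I) * (-1 + (y:ℂ)*Complex.I + 1) *
        ((-1 + (y:ℂ)*Complex.I + 1) * Complex.log (1 + 1/(-1 + (y:ℂ)*Complex.I)) - 1)
        = (y:ℂ)*Complex.I * E := by rw [hE, hw]; ring
    rw [Gc, hprod, mul_inv ((y:ℂ)*Complex.I) E, ← mul_assoc,
      mul_inv_cancel₀ hiy, one_mul]
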